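/- For every natural number n and every integer s ≥ 1, the number of partitions of n in which no part appears more than s − 1 times equals the number of partitions of n in which no part is divisible by s. -/

import Mathlib

open PowerSeries

namespace GlaisherAux


noncomputable section

variable {α : Type*}

open Finset

open scoped Classical

/-- The partial product for the generating function for odd partitions.
TODO: As `m` tends to infinity, this converges (in the `X`-adic topology).

If `m` is sufficiently large, the `i`th coefficient gives the number of odd partitions of the
natural number `i`: proved in `oddGF_prop`.
It is stated for an arbitrary field `α`, though it usually suffices to use `ℚ` or `ℝ`.
-/
def partialOddGF (m : ℕ) [Field α] :=
  ∏ i ∈ range m, (1 - (X : PowerSeries α) ^ (2 * i + 1))⁻¹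

/-- The partial product for the generating function for distinct partitions.
TODO: As `m` tends to infinity, this converges (in the `X`-adic topology).

If `m` is sufficiently large, the `i`th coefficient gives the number of distinct partitions of the
natural number `i`: proved in `distinctGF_prop`.
It is stated for an arbitrary commutative semiring `α`, though it usually suffices to use `ℕ`, `ℚ`
or `ℝ`.
-/
def partialDistinctGF (m : ℕ) [CommSemiring α] :=
  ∏ i ∈ range m, (1 + (X : PowerSeries α) ^ (i + 1))

open Finset.HasAntidiagonal

universe u
variable {ι : Type u}

/-- A convenience constructor for the power series whose coefficients indicate a subset. -/
def indicatorSeries (α : Type*) [Semiring α] (s : Set ℕ) : PowerSeries α :=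
  PowerSeries.mk fun n => if n ∈ s then 1 else 0

theorem coeff_indicator (s : Set ℕ) [Semiring α] (n : ℕ) :
    coeff (R := α) n (indicatorSeries _ s) = if n ∈ s then 1 else 0 :=
  coeff_mk _ _

theorem coeff_indicator_pos (s : Set ℕ) [Semiring α] (n : ℕ) (h : n ∈ s) :
    coeff (R := α) n (indicatorSeries _ s) = 1 := by rw [coeff_indicator, if_pos h]

theorem coeff_indicator_neg (s : Set ℕ) [Semiring α] (n : ℕ) (h : n ∉ s) :
    coeff (R := α) n (indicatorSeries _ s) = 0 := by rw [coeff_indicator, if_neg h]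

theorem constantCoeff_indicator (s : Set ℕ) [Semiring α] :
    constantCoeff (R := α) (indicatorSeries _ s) = if 0 ∈ s then 1 else 0 :=
  rfl

theorem two_series (i : ℕ) [Semiring α] :
    1 + (X : PowerSeries α) ^ i.succ = indicatorSeries α {0, i.succ} := by
  ext n
  simp only [coeff_indicator, coeff_one, coeff_X_pow, Set.mem_insert_iff, Set.mem_singleton_iff,
    map_add]
  cases' n with d
  · simp [(Nat.succ_ne_zero i).symm]
  · simp [Nat.succ_ne_zero d]

theorem num_series' [Field α] (i : ℕ) :
    (1 - (X : PowerSeries α) ^ (i + 1))⁻¹ = indicatorSeries α {k | i + 1 ∣ k} := by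
  rw [PowerSeries.inv_eq_iff_mul_eq_one]
  · ext n
    cases n with
    | zero => simp [mul_sub, zero_pow, constantCoeff_indicator]
    | succ n =>
      simp only [coeff_one, if_false, mul_sub, mul_one, coeff_indicator,
        LinearMap.map_sub, reduceCtorEq]
      simp_rw [coeff_mul, coeff_X_pow, coeff_indicator, @boole_mul _ _ _ _]
      simp only [Set.mem_setOf_eq]
      erw [sum_ite, sum_ite]
      simp_rw [@filter_filter _ _ _ _ _, sum_const_zero, add_zero, sum_const, nsmul_eq_mul, mul_one,
        sub_eq_iff_eq_add, zero_add]
      symm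
      split_ifs with h
      · suffices #{a ∈ antidiagonal (n + 1) | i + 1 ∣ a.fst ∧ a.snd = i + 1} = 1 by
          convert congr_arg ((↑) : ℕ → α) this; norm_cast
        rw [card_eq_one]
        cases' h with p hp
        refine ⟨((i + 1) * (p - 1), i + 1), ?_⟩
        ext ⟨a₁, a₂⟩
        simp only [mem_filter, Prod.mk.injEq, HasAntidiagonal.mem_antidiagonal, mem_singleton]
        constructor
        · rintro ⟨a_left, ⟨a, rfl⟩, rfl⟩
          refine ⟨?_, rfl⟩
          rw [Nat.mul_sub_left_distrib, ← hp, ← a_left, mul_one, Nat.add_sub_cancel]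
        · rintro ⟨rfl, rfl⟩
          match p with
          | 0 => rw [mul_zero] at hp; cases hp
          | p + 1 => rw [hp]; simp [mul_add]
      · suffices #{a ∈ antidiagonal (n + 1) | i + 1 ∣ a.fst ∧ a.snd = i + 1} = 0 by
          convert congr_arg ((↑) : ℕ → α) this; norm_cast
        rw [card_eq_zero]
        apply eq_empty_of_forall_notMem
        simp only [Prod.forall, mem_filter, not_and, HasAntidiagonal.mem_antidiagonal]
        rintro _ h₁ h₂ ⟨a, rfl⟩ rfl
        apply h
        simp [← h₂]
  · simp [zero_pow]

def mkOdd : ℕ ↪ ℕ :=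
  ⟨fun i => 2 * i + 1, fun x y h => by linarith⟩

-- The main workhorse of the partition theorem proof.
theorem partialGF_prop (α : Type*) [CommSemiring α] (n : ℕ) (s : Finset ℕ) (hs : ∀ i ∈ s, 0 < i)
    (c : ℕ → Set ℕ) (hc : ∀ i, i ∉ s → 0 ∈ c i) :
    #{p : n.Partition | (∀ j, p.parts.count j ∈ c j) ∧ ∀ j ∈ p.parts, j ∈ s} =
      coeff (R := α) n (∏ i ∈ s, indicatorSeries α ((· * i) '' c i)) := by
  simp_rw [coeff_prod, coeff_indicator, prod_boole, sum_boole]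
  apply congr_arg
  simp only [mem_univ, forall_true_left, not_and, not_forall, exists_prop,
    Set.mem_image, not_exists]
  set φ : (a : Nat.Partition n) →
    a ∈ filter (fun p ↦ (∀ (j : ℕ), Multiset.count j p.parts ∈ c j) ∧ ∀ j ∈ p.parts, j ∈ s) univ →
    ℕ →₀ ℕ := fun p _ => {
      toFun := fun i => Multiset.count i p.parts • i
      support := Finset.filter (fun i => i ≠ 0) p.parts.toFinset
      mem_support_toFun := fun a => by
        simp only [smul_eq_mul, ne_eq, mul_eq_zero, Multiset.count_eq_zero]
        rw [not_or, not_not]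
        simp only [Multiset.mem_toFinset, not_not, mem_filter] }
  refine Finset.card_bij φ ?_ ?_ ?_
  · intro a ha
    simp only [φ, not_forall, not_exists, not_and, exists_prop, mem_filter]
    rw [mem_finsuppAntidiag]
    dsimp only [ne_eq, smul_eq_mul, id_eq, eq_mpr_eq_cast, le_eq_subset, Finsupp.coe_mk]
    simp only [mem_univ, forall_true_left, not_and, not_forall, exists_prop,
      mem_filter, true_and] at ha
    refine ⟨⟨?_, fun i ↦ ?_⟩, fun i _ ↦ ⟨a.parts.count i, ha.1 i, rfl⟩⟩
    · conv_rhs => simp [← a.parts_sum]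
      rw [sum_multiset_count_of_subset _ s]
      · simp only [smul_eq_mul]
      · intro i
        simp only [Multiset.mem_toFinset, not_not, mem_filter]
        apply ha.2
    · simp only [ne_eq, Multiset.mem_toFinset, not_not, mem_filter, and_imp]
      exact fun hi _ ↦ ha.2 i hi
  · intro p₁ hp₁ p₂ hp₂ h
    apply Nat.Partition.ext
    simp only [true_and, mem_univ, mem_filter] at hp₁ hp₂
    ext i
    simp only [φ, ne_eq, Multiset.mem_toFinset, not_not, smul_eq_mul, Finsupp.mk.injEq] at h
    by_cases hi : i = 0
    · rw [hi]
      rw [Multiset.count_eq_zero_of_notMem]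
      · rw [Multiset.count_eq_zero_of_notMem]
        intro a; exact Nat.lt_irrefl 0 (hs 0 (hp₂.2 0 a))
      intro a; exact Nat.lt_irrefl 0 (hs 0 (hp₁.2 0 a))
    · rw [← mul_left_inj' hi]
      rw [funext_iff] at h
      exact h.2 i
  · simp only [φ, mem_filter, mem_finsuppAntidiag, mem_univ, exists_prop, true_and, and_assoc]
    rintro f ⟨hf, hf₃, hf₄⟩
    have hf' : f ∈ finsuppAntidiag s n := mem_finsuppAntidiag.mpr ⟨hf, hf₃⟩
    simp only [mem_finsuppAntidiag] at hf'
    refine ⟨⟨∑ i ∈ s, Multiset.replicate (f i / i) i, ?_, ?_⟩, ?_, ?_, ?_⟩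
    · intro i hi
      simp only [exists_prop, Multiset.mem_sum, mem_map, Function.Embedding.coeFn_mk] at hi
      rcases hi with ⟨t, ht, z⟩
      apply hs
      rwa [Multiset.eq_of_mem_replicate z]
    · simp_rw [Multiset.sum_sum, Multiset.sum_replicate, Nat.nsmul_eq_mul]
      rw [← hf'.1]
      refine sum_congr rfl fun i hi => Nat.div_mul_cancel ?_
      rcases hf₄ i hi with ⟨w, _, hw₂⟩
      rw [← hw₂]
      exact dvd_mul_left _ _
    · intro i
      simp_rw [Multiset.count_sum', Multiset.count_replicate, sum_ite_eq']
      split_ifs with h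
      · rcases hf₄ i h with ⟨w, hw₁, hw₂⟩
        rwa [← hw₂, Nat.mul_div_cancel _ (hs i h)]
      · exact hc _ h
    · intro i hi
      rw [Multiset.mem_sum] at hi
      rcases hi with ⟨j, hj₁, hj₂⟩
      rwa [Multiset.eq_of_mem_replicate hj₂]
    · ext i
      simp_rw [Multiset.count_sum', Multiset.count_replicate, sum_ite_eq']
      simp only [ne_eq, Multiset.mem_toFinset, not_not, smul_eq_mul, ite_mul,
        zero_mul, Finsupp.coe_mk]
      split_ifs with h
      · apply Nat.div_mul_cancel
        rcases hf₄ i h with ⟨w, _, hw₂⟩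
        apply Dvd.intro_left _ hw₂
      · apply symm
        rw [← Finsupp.notMem_support_iff]
        exact notMem_mono hf'.2 h


-- ### New material for Glaisher's theorem ###

theorem geom_series' [Semiring α] (t i : ℕ) (hi : 0 < i) :
    (∑ j ∈ range t, (X : PowerSeries α) ^ (j * i)) =
      indicatorSeries α ((· * i) '' Set.Iio t) := by
  ext n
  simp only [map_sum, coeff_X_pow, coeff_indicator, Set.mem_image, Set.mem_Iio]
  by_cases h : ∃ j, j < t ∧ j * i = n
  · obtain ⟨j, hj, rfl⟩ := h
    rw [if_pos ⟨j, hj, rfl⟩, Finset.sum_eq_single j]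
    · simp
    · intro b _ hb
      rw [if_neg]
      intro hbij
      exact hb (Nat.eq_of_mul_eq_mul_right hi hbij.symm)
    · intro hj'; exact absurd (mem_range.mpr hj) hj'
  · rw [if_neg h, Finset.sum_eq_zero]
    intro j hj
    rw [if_neg]
    intro hh
    exact h ⟨j, mem_range.mp hj, hh.symm⟩

theorem image_mul_univ (i : ℕ) : ((· * i) '' Set.univ) = {k | i ∣ k} := by
  ext k
  constructor
  · rintro ⟨a, -, rfl⟩
    exact Dvd.intro_left a rfl
  · rintro ⟨a, rfl⟩
    exact ⟨a, trivial, mul_comm a i⟩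

/-- counting lemma for bounded multiplicities -/
theorem boundedGF_prop [Field α] (n m t : ℕ) (ht : 1 ≤ t) (hn : n < m + 1) :
    (Nat.card {p : n.Partition // ∀ i, p.parts.count i ≤ t - 1} : α) =
      coeff (R := α) n (∏ i ∈ range m, ∑ j ∈ range t, (X : PowerSeries α) ^ (j * (i + 1))) := by
  have key := partialGF_prop α n ((range m).map ⟨Nat.succ, Nat.succ_injective⟩)
    (by rintro i hi; rw [mem_map] at hi; obtain ⟨a, -, rfl⟩ := hi; exact Nat.succ_pos a)
    (fun _ => Set.Iio t) (fun i _ => ht)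
  rw [Finset.prod_map] at key
  simp only [Function.Embedding.coeFn_mk, Nat.succ_eq_add_one] at key
  rw [Finset.prod_congr rfl fun i (_ : i ∈ range m) =>
    (geom_series' t (i + 1) i.succ_pos : _)]
  rw [← key]
  rw [Nat.card_eq_fintype_card, Fintype.card_subtype]
  refine congrArg _ (congr_arg Finset.card ?_)
  ext p
  simp only [mem_filter, mem_univ, true_and, Set.mem_Iio, mem_map, mem_range, Function.Embedding.coeFn_mk]
  constructor
  · intro h
    refine ⟨fun j => by have := h j; omega, fun j hj => ?_⟩
    have hj' : j ≤ n := by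
      simpa [p.parts_sum] using Multiset.single_le_sum (fun _ _ => Nat.zero_le _) _ hj
    have hj0 : 0 < j := p.parts_pos hj
    exact ⟨j - 1, by omega, by omega⟩
  · intro h i
    have := h.1 i
    omega

/-- counting lemma for parts not divisible by `t` -/
theorem nondivGF_prop [Field α] (n m t : ℕ) (hn : n < m + 1) :
    (Nat.card {p : n.Partition // ∀ i ∈ p.parts, ¬ t ∣ i} : α) =
      coeff (R := α) n (∏ i ∈ (range m).filter (fun i => ¬ t ∣ (i + 1)),
        (1 - (X : PowerSeries α) ^ (i + 1))⁻¹) := by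
  have key := partialGF_prop α n
    (((range m).map ⟨Nat.succ, Nat.succ_injective⟩).filter (fun i => ¬ t ∣ i))
    (by rintro i hi
        rw [mem_filter, mem_map] at hi
        obtain ⟨⟨a, -, rfl⟩, -⟩ := hi
        exact Nat.succ_pos a)
    (fun _ => Set.univ) (fun _ _ => trivial)
  rw [Finset.filter_map, Finset.prod_map] at key
  simp only [Function.Embedding.coeFn_mk, Function.comp_def, Nat.succ_eq_add_one] at key
  have keyr : (∏ x ∈ (range m).filter (fun i => ¬ t ∣ (i + 1)),
      indicatorSeries α ((· * (x + 1)) '' Set.univ)) =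
      ∏ x ∈ (range m).filter (fun i => ¬ t ∣ (i + 1)),
        (1 - (X : PowerSeries α) ^ (x + 1))⁻¹ :=
    Finset.prod_congr rfl fun i _ => by rw [image_mul_univ, ← num_series']
  rw [keyr] at key
  rw [← key]
  rw [Nat.card_eq_fintype_card, Fintype.card_subtype]
  refine congrArg _ (congr_arg Finset.card ?_)
  ext p
  simp only [mem_univ, Set.mem_univ, forall_const, true_and, mem_filter, mem_map, mem_range,
    Function.Embedding.coeFn_mk]
  constructor
  · intro h j hj
    have hj' : j ≤ n := by
      simpa [p.parts_sum] using Multiset.single_le_sum (fun _ _ => Nat.zero_le _) _ hj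
    have hj0 : 0 < j := p.parts_pos hj
    refine ⟨j - 1, ⟨by omega, ?_⟩, by omega⟩
    have hjj : j - 1 + 1 = j := by omega
    rw [hjj]
    exact h j hj
  · intro h j hj
    obtain ⟨a, ⟨-, ha⟩, rfl⟩ := h j hj
    exact ha

theorem constantCoeff_one_sub_X_pow [Field α] (i : ℕ) :
    constantCoeff (R := α) (1 - X ^ (i + 1)) = 1 := by
  simp [zero_pow]

/-- the key algebraic identity -/
theorem glaisher_gf [Field α] (m t : ℕ) (ht : 1 ≤ t) :
    (∏ i ∈ (range (t * m)).filter (fun i => ¬ t ∣ (i + 1)),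
        (1 - (X : PowerSeries α) ^ (i + 1))⁻¹) *
      (∏ i ∈ range (t * m) \ range m, (1 - (X : PowerSeries α) ^ (i + 1))) =
    ∏ i ∈ range m, ∑ j ∈ range t, (X : PowerSeries α) ^ (j * (i + 1)) := by
  set F : PowerSeries α := ∏ i ∈ range m, ∑ j ∈ range t, (X : PowerSeries α) ^ (j * (i + 1))
    with hF
  set G : PowerSeries α := ∏ i ∈ (range (t * m)).filter (fun i => ¬ t ∣ (i + 1)),
    (1 - (X : PowerSeries α) ^ (i + 1))⁻¹ with hG
  set R : PowerSeries α := ∏ i ∈ (range (t * m)).filter (fun i => ¬ t ∣ (i + 1)),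
    (1 - (X : PowerSeries α) ^ (i + 1)) with hR
  set T : PowerSeries α := ∏ i ∈ range (t * m) \ range m,
    (1 - (X : PowerSeries α) ^ (i + 1)) with hT
  set P : ℕ → PowerSeries α := fun k => ∏ i ∈ range k, (1 - (X : PowerSeries α) ^ (i + 1))
    with hP
  set Q : PowerSeries α := ∏ i ∈ range m, (1 - (X : PowerSeries α) ^ (t * (i + 1))) with hQ
  have hsub : range m ⊆ range (t * m) := by
    apply range_subset_range.mpr
    calc m = 1 * m := (one_mul m).symm
    _ ≤ t * m := Nat.mul_le_mul_right m ht
  -- (a) F * P m = Q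
  have ha : F * P m = Q := by
    rw [hF, hP, hQ, ← Finset.prod_mul_distrib]
    refine Finset.prod_congr rfl fun i _ => ?_
    have hg := geom_sum_mul ((X : PowerSeries α) ^ (i + 1)) t
    have hr : ∑ j ∈ range t, (X : PowerSeries α) ^ (j * (i + 1)) =
        ∑ j ∈ range t, ((X : PowerSeries α) ^ (i + 1)) ^ j := by
      refine Finset.sum_congr rfl fun j _ => ?_
      rw [← pow_mul, mul_comm]
    rw [hr, pow_mul']
    linear_combination -hg
  -- (c) divisible part equals Q
  have hc : (∏ i ∈ (range (t * m)).filter (fun i => t ∣ (i + 1)),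
      (1 - (X : PowerSeries α) ^ (i + 1))) = Q := by
    have himg : (range (t * m)).filter (fun i => t ∣ (i + 1)) =
        (range m).image (fun j => t * (j + 1) - 1) := by
      ext i
      simp only [mem_filter, mem_range, mem_image]
      constructor
      · rintro ⟨h1, q, hq⟩
        have hq1 : 1 ≤ q := by
          rcases Nat.eq_zero_or_pos q with rfl | h
          · rw [mul_zero] at hq; omega
          · exact h
        have hqm : q ≤ m := by
          by_contra hh
          push_neg at hh
          have h2 : t * (m + 1) ≤ t * q := Nat.mul_le_mul_left t (by omega)
          rw [← hq] at h2
          have h3 : t * (m + 1) = t * m + t := by ring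
          omega
        refine ⟨q - 1, by omega, ?_⟩
        have hq' : q - 1 + 1 = q := by omega
        rw [hq', ← hq]
        omega
      · rintro ⟨j, hj, rfl⟩
        have h1 : 0 < t * (j + 1) := by positivity
        have h2 : t * (j + 1) ≤ t * m := Nat.mul_le_mul_left t (by omega)
        refine ⟨Nat.lt_of_lt_of_le (Nat.sub_lt h1 Nat.one_pos) h2, j + 1, ?_⟩
        rw [Nat.sub_add_cancel h1]
    rw [himg, Finset.prod_image]
    · refine Finset.prod_congr rfl fun j _ => ?_
      have h1 : 0 < t * (j + 1) := by positivity
      rw [Nat.sub_add_cancel h1]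
    · intro a _ b _ hab
      have h1 : 0 < t * (a + 1) := by positivity
      have h2 : 0 < t * (b + 1) := by positivity
      have heq : t * (a + 1) = t * (b + 1) := by
        rw [← Nat.sub_add_cancel h1, ← Nat.sub_add_cancel h2]; exact congrArg (· + 1) hab
      have := Nat.eq_of_mul_eq_mul_left (by omega : 0 < t) heq
      omega
  -- (b) P (t*m) = Q * R
  have hb : P (t * m) = Q * R := by
    rw [hP, hR, ← hc, Finset.prod_filter_mul_prod_filter_not]
  -- (d) P (t*m) = P m * T
  have hd : P (t * m) = P m * T := by
    rw [hP, hT, mul_comm (∏ i ∈ range m, (1 - (X : PowerSeries α) ^ (i + 1))),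
      Finset.prod_sdiff hsub]
  -- (e) G * R = 1
  have he : G * R = 1 := by
    rw [hG, hR, ← Finset.prod_mul_distrib]
    refine Finset.prod_eq_one fun i _ => ?_
    refine PowerSeries.inv_mul_cancel _ ?_
    rw [constantCoeff_one_sub_X_pow]
    exact one_ne_zero
  -- combine
  have hPR : P m * R ≠ 0 := by
    have hcc : constantCoeff (R := α) (P m * R) = 1 := by
      rw [map_mul, hP, hR, map_prod, map_prod]
      simp [constantCoeff_one_sub_X_pow]
    intro hzero
    rw [hzero, map_zero] at hcc
    exact one_ne_zero hcc.symm
  apply mul_right_cancel₀ hPR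
  calc G * T * (P m * R) = (G * R) * (P m * T) := by ring
    _ = P m * T := by rw [he, one_mul]
    _ = Q * R := by rw [← hd, hb]
    _ = F * P m * R := by rw [ha]
    _ = F * (P m * R) := by ring

end
end GlaisherAux

open GlaisherAux Finset PowerSeries in
/-- Glaisher's theorem: for `s ≥ 1`, the number of partitions of `n` in which no part
appears more than `s - 1` times equals the number of partitions of `n` in which no part
is divisible by `s`. -/
theorem glaisher (n s : ℕ) (hs : 1 ≤ s) :
    Nat.card {p : n.Partition // ∀ i, p.parts.count i ≤ s - 1} =
      Nat.card {p : n.Partition // ∀ i ∈ p.parts, ¬ s ∣ i} := by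
  classical
  suffices h : (Nat.card {p : n.Partition // ∀ i, p.parts.count i ≤ s - 1} : ℚ) =
      (Nat.card {p : n.Partition // ∀ i ∈ p.parts, ¬ s ∣ i} : ℚ) by exact_mod_cast h
  rw [boundedGF_prop (α := ℚ) n (n + 1) s hs (by omega),
    nondivGF_prop (α := ℚ) n (s * (n + 1)) s
      (by have h1 : n + 1 ≤ s * (n + 1) := Nat.le_mul_of_pos_left _ hs; omega),
    ← glaisher_gf (n + 1) s hs,
    PowerSeries.coeff_mul_prod_one_sub_of_lt_order]
  intro i hi
  simp only [Finset.mem_sdiff, Finset.mem_range, not_lt] at hi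
  rw [PowerSeries.order_X_pow]
  exact_mod_cast Nat.lt_succ_of_le (by omega : n ≤ i)
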